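/- For every set X, the class H_X is a set. Moreover, if X is an infinite transitive set, then H_X is a transitive, full set of successor type with maximal cardinality X, and H_X is strongly regular. -/

import Mathlib

namespace NairianModels

open ZFSet

/-! ## Basic cardinality notions -/

/-- `f` codes a surjection from `X` onto `Y`: a set of Kuratowski ordered pairs that is a
function with domain `X` and values in `Y`, every element of `Y` being a value. -/
def ZFSurj (X Y f : ZFSet) : Prop :=
  ZFSet.IsFunc X Y f ∧ ∀ y ∈ Y, ∃ x ∈ X, ZFSet.pair x y ∈ f

/-- `|X| ≲ |Y|`: either `X = ∅` or there is a surjection from `Y` onto `X`. -/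
def CardLE (X Y : ZFSet) : Prop :=
  X = ∅ ∨ ∃ f, ZFSurj Y X f

/-- `|X| ≈ |Y|`. -/
def CardEq (X Y : ZFSet) : Prop :=
  CardLE X Y ∧ CardLE Y X

/-- `X` is a maximal cardinality of `M`: `X ∈ M` and every nonempty `Y ∈ M` is the image of a
surjection from `X` that belongs to `M`. -/
def IsMaxCard (X M : ZFSet) : Prop :=
  X ∈ M ∧ ∀ Y ∈ M, Y = ∅ ∨ ∃ f ∈ M, ZFSurj X Y f

/-- `M` is of successor type: it has a maximal cardinality. -/
def SuccType (M : ZFSet) : Prop :=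
  ∃ X, IsMaxCard X M

/-! ## Fullness -/

def TransClosed (M : ZFSet) : Prop :=
  ∀ Y ∈ M, ∃ Z ∈ M, Z.IsTransitive ∧ Z ⊆ M ∧ Y ∈ Z

def ProdClosed (M : ZFSet) : Prop :=
  ∀ X ∈ M, ∀ Y ∈ M, ZFSet.prod X Y ∈ M

def SubsetClosed (M : ZFSet) : Prop :=
  ∀ X ∈ M, ZFSet.powerset X ⊆ M

def Full (M : ZFSet) : Prop :=
  TransClosed M ∧ ProdClosed M ∧ SubsetClosed M

/-! ## Ordinals, strong regularity, hierarchicality, H-likeness -/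

/-- von Neumann ordinal: a transitive set linearly ordered by `∈`. -/
def IsOrd (x : ZFSet) : Prop :=
  x.IsTransitive ∧
    (∀ y ∈ x, ∀ z ∈ x, y ∈ z ∨ y = z ∨ z ∈ y) ∧
    (∀ a ∈ x, ∀ b ∈ x, ∀ c ∈ x, a ∈ b → b ∈ c → a ∈ c)

/-- limit (von Neumann) ordinal: a nonempty ordinal with no largest element. -/
def IsLimitOrd (x : ZFSet) : Prop :=
  IsOrd x ∧ x ≠ ∅ ∧ ∀ y ∈ x, ∃ z ∈ x, y ∈ z

/-- `M` is strongly regular: any (set-coded) function from an `X ∈ M` to the ordinals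
belonging to `M` is bounded by an ordinal in `M`. -/
def StronglyRegular (M : ZFSet) : Prop :=
  ∀ X ∈ M, ∀ f : ZFSet,
    (∀ p ∈ f, ∃ x ∈ X, ∃ o, IsOrd o ∧ o ∈ M ∧ p = ZFSet.pair x o) →
    (∀ x ∈ X, ∃ o, ZFSet.pair x o ∈ f) →
    (∀ x ∈ X, ∀ o o', ZFSet.pair x o ∈ f → ZFSet.pair x o' ∈ f → o = o') →
    ∃ β, IsOrd β ∧ β ∈ M ∧ ∀ x ∈ X, ∀ o, ZFSet.pair x o ∈ f → o ∈ β

/-- `M` is hierarchical: it is the continuous increasing union, along the ordinals belonging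
to `M`, of transitive sets belonging to `M`. -/
def Hierarchical (M : ZFSet) : Prop :=
  ∃ F : ZFSet → ZFSet,
    (∀ α, IsOrd α → α ∈ M → (F α).IsTransitive ∧ F α ∈ M) ∧
    (∀ α β, IsOrd α → IsOrd β → α ∈ M → β ∈ M → α ∈ β → F α ⊆ F β) ∧
    (∀ β, IsLimitOrd β → β ∈ M → ∀ x, x ∈ F β ↔ ∃ α ∈ β, x ∈ F α) ∧
    (∀ x, x ∈ M ↔ ∃ α, IsOrd α ∧ α ∈ M ∧ x ∈ F α)

/-- `M` is H-like: transitive, full, hierarchical, and strongly regular in case it is of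
successor type. -/
def HLike (M : ZFSet) : Prop :=
  M.IsTransitive ∧ Full M ∧ Hierarchical M ∧ (SuccType M → StronglyRegular M)

/-! ## Transitive closure and the classes `H_X` -/

/-- Iterated unions: `iterUnion x n = ⋃ⁿ x`. -/
def iterUnion (x : ZFSet) : ℕ → ZFSet
  | 0 => x
  | n + 1 => ZFSet.sUnion (iterUnion x n)

/-- The transitive closure of `x` (the least transitive set including `x`):
`x ∪ ⋃x ∪ ⋃⋃x ∪ ⋯`. -/
noncomputable def transCl (x : ZFSet) : ZFSet :=
  ZFSet.sUnion (ZFSet.range fun n : ℕ => iterUnion x n)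

/-- `Y ∈ H_X`: there is a surjection from `X` onto the transitive closure of `{Y}`. -/
def MemH (X Y : ZFSet) : Prop :=
  ∃ f, ZFSurj X (transCl ({Y} : ZFSet)) f

/-! ## First-order logic over `(W, ∈)` -/

/-- Formulas of the language of set theory, with variables indexed by `ℕ`. -/
inductive Fml : Type
  | mem : ℕ → ℕ → Fml
  | equal : ℕ → ℕ → Fml
  | not : Fml → Fml
  | and : Fml → Fml → Fml
  | ex : ℕ → Fml → Fml

/-- Satisfaction of a formula in the structure `(D, ∈)` under the assignment `v`. -/
def Sat (D : ZFSet) : Fml → (ℕ → ZFSet) → Prop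
  | .mem i j, v => v i ∈ v j
  | .equal i j, v => v i = v j
  | .not φ, v => ¬ Sat D φ v
  | .and φ ψ, v => Sat D φ v ∧ Sat D ψ v
  | .ex n φ, v => ∃ a, a ∈ D ∧ Sat D φ (Function.update v n a)

/-- `(X, ∈)` is an elementary substructure of `(W, ∈)`. -/
def ElemSub (X W : ZFSet) : Prop :=
  X ⊆ W ∧ ∀ (φ : Fml) (v : ℕ → ZFSet), (∀ n, v n ∈ X) → (Sat X φ v ↔ Sat W φ v)

/-- `π` is an elementary embedding of `(M, ∈)` into `(W, ∈)`. -/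
def IsElemEmb (M W : ZFSet) (π : ZFSet → ZFSet) : Prop :=
  (∀ x ∈ M, π x ∈ W) ∧
    ∀ (φ : Fml) (v : ℕ → ZFSet), (∀ n, v n ∈ M) →
      (Sat M φ v ↔ Sat W φ fun n => π (v n))

/-- `M` is `X`-closed: `X ∪ {X} ⊆ M` and every (set-coded) function from `X` into `M`
belongs to `M`. -/
def XClosed (X M : ZFSet) : Prop :=
  X ⊆ M ∧ X ∈ M ∧ ∀ f, ZFSet.IsFunc X M f → f ∈ M

/-- `M` is definably closed: any subset of a transitive `N ∈ M` definable over `(N, ∈)` with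
parameters in `N` belongs to `M`. -/
def DefClosed (M : ZFSet) : Prop :=
  ∀ N, N ∈ M → N.IsTransitive →
    ∀ (φ : Fml) (v : ℕ → ZFSet), (∀ n, v n ∈ N) →
      ∀ A : ZFSet, (∀ y, y ∈ A ↔ y ∈ N ∧ Sat N φ (Function.update v 0 y)) → A ∈ M

/-- The reflection principle `ref(X, Y, Z)`. -/
def Ref (X Y Z : ZFSet) : Prop :=
  ∀ W a : ZFSet, W.IsTransitive → XClosed X W → Y ∈ W → a ∈ W →
    ∃ (M : ZFSet) (π : ZFSet → ZFSet),
      M.IsTransitive ∧ IsElemEmb M W π ∧ ({X, Y} : ZFSet) ∈ M ∧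
      (∃ x ∈ M, π x = a) ∧ M ∈ Z ∧
      (∀ z, z ∈ X ∨ z ∈ Y ∨ z = X ∨ z = Y → π z = z) ∧ XClosed X M

/-! ## The N-hierarchy -/

/-- Hereditarily finite sets. -/
def HFin : ZFSet → Prop :=
  ZFSet.mem_wf.fix (C := fun _ => Prop) fun x IH =>
    x.toSet.Finite ∧ ∀ y, ∀ h : y ∈ x, IH y h

/-- `F` is the N-hierarchy: `F 0` is the set of hereditarily finite sets, `F 1 = H_{F 0}`,
`F (α+2) = H_{F (α+1)}`, and for limit `α`, `F α = ⋃_{β<α} F β` and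
`F (α+1) = H_{𝒫(F α)}`. -/
def IsNHierarchy (F : Ordinal → ZFSet) : Prop :=
  (∀ Y, Y ∈ F 0 ↔ HFin Y) ∧
  (∀ Y, Y ∈ F 1 ↔ MemH (F 0) Y) ∧
  (∀ α : Ordinal, ∀ Y, Y ∈ F (α + 2) ↔ MemH (F (α + 1)) Y) ∧
  (∀ α : Ordinal, Order.IsSuccLimit α →
    (∀ Y, Y ∈ F α ↔ ∃ β < α, Y ∈ F β) ∧
    (∀ Y, Y ∈ F (α + 1) ↔ MemH (ZFSet.powerset (F α)) Y))

/-! ## Auxiliary product constructions -/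

/-- Left-nested cartesian product `Y 0 × Y 1 × ⋯ × Y n`. -/
def nestedProd (Y : ℕ → ZFSet) : ℕ → ZFSet
  | 0 => Y 0
  | n + 1 => ZFSet.prod (nestedProd Y n) (Y (n + 1))

/-- Left-nested cartesian power `X^n` (with junk value `∅` at `n = 0`). -/
def nPow (X : ZFSet) : ℕ → ZFSet
  | 0 => ∅
  | 1 => X
  | n + 2 => ZFSet.prod (nPow X (n + 1)) X

/-- `W` is `<κ`-closed: every function from an ordinal `η < κ` into `W` belongs to `W`. -/
def LtClosed (κ W : ZFSet) : Prop :=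
  ∀ η ∈ κ, ∀ f, ZFSet.IsFunc η W f → f ∈ W

/-! ## Auxiliary infrastructure for Statement 15 -/

/-- Image of a ZFC set under an arbitrary (meta-level) map, via classical definability. -/
noncomputable def zimage (g : ZFSet → ZFSet) : ZFSet → ZFSet :=
  @ZFSet.image g (Classical.allZFSetDefinable _)

theorem mem_zimage {g : ZFSet → ZFSet} {x y : ZFSet} :
    y ∈ zimage g x ↔ ∃ z ∈ x, g z = y :=
  @ZFSet.mem_image g (Classical.allZFSetDefinable _) x y

/-- Graph of an arbitrary (meta-level) map restricted to a ZFC set. -/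
noncomputable def zmap (g : ZFSet → ZFSet) : ZFSet → ZFSet :=
  @ZFSet.map g (Classical.allZFSetDefinable _)

theorem zmap_isFunc {g : ZFSet → ZFSet} {x y : ZFSet} :
    ZFSet.IsFunc x y (zmap g x) ↔ ∀ z ∈ x, g z ∈ y :=
  @ZFSet.map_isFunc g (Classical.allZFSetDefinable _) x y

theorem mem_zmap {g : ZFSet → ZFSet} {x y : ZFSet} :
    y ∈ zmap g x ↔ ∃ z ∈ x, ZFSet.pair z (g z) = y :=
  @ZFSet.mem_map g (Classical.allZFSetDefinable _) x y

theorem mem_transCl {x z : ZFSet} : z ∈ transCl x ↔ ∃ n, z ∈ iterUnion x n := by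
  constructor
  · intro h
    obtain ⟨w, hw, hz⟩ := ZFSet.mem_sUnion.1 h
    obtain ⟨n, rfl⟩ := ZFSet.mem_range.1 hw
    exact ⟨n, hz⟩
  · rintro ⟨n, hn⟩
    exact ZFSet.mem_sUnion.2 ⟨_, ZFSet.mem_range.2 ⟨n, rfl⟩, hn⟩

theorem subset_transCl (x : ZFSet) : x ⊆ transCl x :=
  fun _ hz => mem_transCl.2 ⟨0, hz⟩

theorem transCl_isTransitive (x : ZFSet) : (transCl x).IsTransitive := by
  intro y hy
  intro w hw
  obtain ⟨n, hn⟩ := mem_transCl.1 hy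
  exact mem_transCl.2 ⟨n + 1, ZFSet.mem_sUnion.2 ⟨y, hn, hw⟩⟩

theorem transCl_subset {x T : ZFSet} (hT : T.IsTransitive) (h : x ⊆ T) : transCl x ⊆ T := by
  have key : ∀ n, ∀ z, z ∈ iterUnion x n → z ∈ T := by
    intro n
    induction n with
    | zero => exact fun z hz => h hz
    | succ n IH =>
      intro z hn
      obtain ⟨w, hw, hzw⟩ := ZFSet.mem_sUnion.1 hn
      exact hT w (IH w hw) hzw
  intro z hz
  obtain ⟨n, hn⟩ := mem_transCl.1 hz
  exact key n z hn

theorem mem_transCl_self (Y : ZFSet) : Y ∈ transCl ({Y} : ZFSet) :=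
  subset_transCl _ (ZFSet.mem_singleton.2 rfl)

theorem subset_transCl_singleton (Y : ZFSet) : Y ⊆ transCl ({Y} : ZFSet) :=
  transCl_isTransitive _ Y (mem_transCl_self Y)

theorem isTransitive_insert {Y U : ZFSet} (hU : U.IsTransitive) (hYU : Y ⊆ U) :
    (insert Y U).IsTransitive := by
  intro z hz
  rcases ZFSet.mem_insert_iff.1 hz with rfl | hzU
  · exact fun w hw => ZFSet.mem_insert_iff.2 (Or.inr (hYU hw))
  · exact fun w hw => ZFSet.mem_insert_iff.2 (Or.inr (hU z hzU hw))

theorem transCl_singleton_subset {Y U : ZFSet} (hU : U.IsTransitive) (hYU : Y ⊆ U) :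
    transCl ({Y} : ZFSet) ⊆ insert Y U := by
  refine transCl_subset (isTransitive_insert hU hYU) ?_
  intro z hz
  rw [ZFSet.mem_singleton] at hz
  subst hz
  exact ZFSet.mem_insert_iff.2 (Or.inl rfl)

/-! ### Surjections and cardinalities -/

theorem zfsurj_exists_iff {A B : ZFSet} :
    (∃ f, ZFSurj A B f) ↔
      ∃ σ : ZFSet → ZFSet, (∀ a ∈ A, σ a ∈ B) ∧ ∀ b ∈ B, ∃ a ∈ A, σ a = b := by
  haveI : Nonempty ZFSet := ⟨∅⟩
  constructor
  · rintro ⟨f, ⟨hsub, huniq⟩, hsurj⟩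
    refine ⟨fun a => Classical.epsilon (fun w => ZFSet.pair a w ∈ f), fun a ha => ?_, fun b hb => ?_⟩
    · obtain ⟨w, hw, -⟩ := huniq a ha
      have hspec := Classical.epsilon_spec (p := fun w => ZFSet.pair a w ∈ f) ⟨w, hw⟩
      exact (ZFSet.pair_mem_prod.1 (hsub hspec)).2
    · obtain ⟨x, hx, hpx⟩ := hsurj b hb
      have hspec := Classical.epsilon_spec (p := fun w => ZFSet.pair x w ∈ f) ⟨b, hpx⟩
      obtain ⟨w, -, huw⟩ := huniq x hx
      exact ⟨x, hx, (huw _ hspec).trans (huw b hpx).symm⟩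
  · rintro ⟨σ, hσB, hσs⟩
    refine ⟨zmap σ A, ⟨zmap_isFunc.2 hσB, ?_⟩⟩
    intro b hb
    obtain ⟨a, ha, hab⟩ := hσs b hb
    exact ⟨a, ha, mem_zmap.2 ⟨a, ha, by rw [hab]⟩⟩

theorem card_of_surj {A B : ZFSet} (h : ∃ f, ZFSurj A B f) :
    Cardinal.mk B.toSet ≤ Cardinal.mk A.toSet := by
  obtain ⟨σ, h1, h2⟩ := zfsurj_exists_iff.1 h
  have hs : Function.Surjective (fun a : A.toSet => (⟨σ a.1, h1 a.1 a.2⟩ : B.toSet)) := by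
    rintro ⟨b, hb⟩
    obtain ⟨a, ha, rfl⟩ := h2 b hb
    exact ⟨⟨a, ha⟩, rfl⟩
  exact Cardinal.mk_le_of_surjective hs

theorem surj_of_card {A B a0 b0 : ZFSet} (ha0 : a0 ∈ A) (hb0 : b0 ∈ B)
    (h : Cardinal.mk B.toSet ≤ Cardinal.mk A.toSet) : ∃ f, ZFSurj A B f := by
  obtain ⟨emb⟩ := (Cardinal.le_def _ _).1 h
  haveI : Nonempty B.toSet := ⟨⟨b0, hb0⟩⟩
  have hgs : Function.Surjective (Function.invFun emb) := Function.invFun_surjective emb.injective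
  apply zfsurj_exists_iff.2
  classical
  refine ⟨fun a => if h : a ∈ A then ((Function.invFun emb ⟨a, h⟩ : B.toSet) : ZFSet) else b0,
    ?_, ?_⟩
  · intro a ha
    simp only [dif_pos ha]
    exact (Function.invFun emb ⟨a, ha⟩).2
  · intro b hb
    obtain ⟨⟨a, ha⟩, hga⟩ := hgs ⟨b, hb⟩
    have ha' : a ∈ A := ha
    refine ⟨a, ha', ?_⟩
    simp only [dif_pos ha']
    rw [hga]

theorem memH_iff {X Y x0 : ZFSet} (hx0 : x0 ∈ X) :
    MemH X Y ↔ Cardinal.mk (transCl ({Y} : ZFSet)).toSet ≤ Cardinal.mk X.toSet :=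
  ⟨fun h => card_of_surj h, fun h => surj_of_card hx0 (mem_transCl_self Y) h⟩

theorem card_subset {A B : ZFSet} (h : A ⊆ B) : Cardinal.mk A.toSet ≤ Cardinal.mk B.toSet :=
  Cardinal.mk_le_mk_of_subset (fun z hz => h hz)

theorem toSet_insert' (a A : ZFSet) : (insert a A).toSet = insert a A.toSet :=
  Set.ext fun _ => ZFSet.mem_insert_iff

theorem card_insert_le (a A : ZFSet) :
    Cardinal.mk (insert a A : ZFSet).toSet ≤ Cardinal.mk A.toSet + 1 := by
  rw [toSet_insert']
  exact Cardinal.mk_insert_le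

theorem card_union_le (A B : ZFSet) :
    Cardinal.mk (A ∪ B : ZFSet).toSet ≤ Cardinal.mk A.toSet + Cardinal.mk B.toSet := by
  rw [show (A ∪ B).toSet = A.toSet ∪ B.toSet from Set.ext fun _ => ZFSet.mem_union]
  exact Cardinal.mk_union_le _ _

theorem card_prod_le (A B : ZFSet) :
    Cardinal.mk (ZFSet.prod A B).toSet ≤ Cardinal.mk A.toSet * Cardinal.mk B.toSet := by
  have hc : ∀ z : (ZFSet.prod A B).toSet,
      ∃ q : A.toSet × B.toSet, (z : ZFSet) = ZFSet.pair q.1.1 q.2.1 := by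
    rintro ⟨z, hz⟩
    obtain ⟨a, ha, b, hb, rfl⟩ := ZFSet.mem_prod.1 hz
    exact ⟨(⟨a, ha⟩, ⟨b, hb⟩), rfl⟩
  choose q hq using hc
  have hinj : Function.Injective q := by
    intro z1 z2 hz
    apply Subtype.ext
    rw [hq z1, hq z2, hz]
  calc Cardinal.mk (ZFSet.prod A B).toSet ≤ Cardinal.mk (A.toSet × B.toSet) :=
        Cardinal.mk_le_of_injective hinj
    _ = _ := by rw [Cardinal.mk_prod, Cardinal.lift_id, Cardinal.lift_id]

theorem card_sUnion_pairs_le {A B C : ZFSet} (h : A ⊆ ZFSet.prod B C) :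
    Cardinal.mk (ZFSet.sUnion A).toSet ≤ Cardinal.mk A.toSet + Cardinal.mk A.toSet := by
  have hc : ∀ p : A.toSet, ∃ ab : ZFSet × ZFSet, (p : ZFSet) = ZFSet.pair ab.1 ab.2 := by
    rintro ⟨p, hp⟩
    obtain ⟨a, _, b, _, rfl⟩ := ZFSet.mem_prod.1 (h hp)
    exact ⟨(a, b), rfl⟩
  choose ab hab using hc
  have hsub : (ZFSet.sUnion A).toSet ⊆
      Set.range (fun q : A.toSet ⊕ A.toSet =>
        Sum.rec (fun p => ({(ab p).1} : ZFSet)) (fun p => ({(ab p).1, (ab p).2} : ZFSet)) q) := by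
    intro s hs
    obtain ⟨p, hp, hsp⟩ := ZFSet.mem_sUnion.1 hs
    have hpair : p = ZFSet.pair (ab ⟨p, hp⟩).1 (ab ⟨p, hp⟩).2 := hab ⟨p, hp⟩
    rw [hpair] at hsp
    simp only [ZFSet.pair, ZFSet.mem_insert_iff, ZFSet.mem_singleton] at hsp
    rcases hsp with rfl | rfl
    · exact ⟨Sum.inl ⟨p, hp⟩, rfl⟩
    · exact ⟨Sum.inr ⟨p, hp⟩, rfl⟩
  calc Cardinal.mk (ZFSet.sUnion A).toSet
      ≤ Cardinal.mk (Set.range (fun q : A.toSet ⊕ A.toSet =>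
          Sum.rec (fun p => ({(ab p).1} : ZFSet)) (fun p => ({(ab p).1, (ab p).2} : ZFSet)) q)) :=
        Cardinal.mk_le_mk_of_subset hsub
    _ ≤ Cardinal.mk (A.toSet ⊕ A.toSet) := Cardinal.mk_range_le
    _ = _ := by simp [Cardinal.mk_sum]

theorem card_image_le (g : ZFSet → ZFSet) (A : ZFSet) :
    Cardinal.mk (zimage g A).toSet ≤ Cardinal.mk A.toSet := by
  have hs : Function.Surjective (fun a : A.toSet =>
      (⟨g a.1, mem_zimage.2 ⟨a.1, a.2, rfl⟩⟩ : (zimage g A).toSet)) := by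
    rintro ⟨z, hz⟩
    obtain ⟨a, ha, rfl⟩ := mem_zimage.1 hz
    exact ⟨⟨a, ha⟩, rfl⟩
  exact Cardinal.mk_le_of_surjective hs

theorem ctc_le_of_subset {W T : ZFSet} {κ : Cardinal} (hκ : Cardinal.aleph0 ≤ κ)
    (hT : T.IsTransitive) (hW : W ⊆ T) (h : Cardinal.mk T.toSet ≤ κ) :
    Cardinal.mk (transCl ({W} : ZFSet)).toSet ≤ κ := by
  refine (card_subset (transCl_singleton_subset hT hW)).trans ?_
  refine (card_insert_le W T).trans ?_
  exact Cardinal.add_le_of_le hκ h ((le_of_lt Cardinal.one_lt_aleph0).trans hκ)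

theorem ctc_pairs_le {F B C : ZFSet} {κ : Cardinal} (hκ : Cardinal.aleph0 ≤ κ)
    (hF : F ⊆ ZFSet.prod B C)
    (hB : Cardinal.mk (transCl ({B} : ZFSet)).toSet ≤ κ)
    (hC : Cardinal.mk (transCl ({C} : ZFSet)).toSet ≤ κ) :
    Cardinal.mk (transCl ({F} : ZFSet)).toSet ≤ κ := by
  have hBsub : Cardinal.mk B.toSet ≤ κ := (card_subset (subset_transCl_singleton B)).trans hB
  have hCsub : Cardinal.mk C.toSet ≤ κ := (card_subset (subset_transCl_singleton C)).trans hC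
  set U := (F ∪ ZFSet.sUnion F) ∪ (transCl ({B} : ZFSet) ∪ transCl ({C} : ZFSet)) with hU
  have hUtrans : U.IsTransitive := by
    intro z hz
    rcases ZFSet.mem_union.1 hz with hz1 | hz2
    · rcases ZFSet.mem_union.1 hz1 with hzF | hzUF
      · -- z ∈ F : members of z go into ⋃₀ F
        intro w hw
        exact ZFSet.mem_union.2 (Or.inl (ZFSet.mem_union.2
          (Or.inr (ZFSet.mem_sUnion.2 ⟨z, hzF, hw⟩))))
      · -- z ∈ ⋃₀ F : z is {b} or {b, c}
        obtain ⟨p, hpF, hzp⟩ := ZFSet.mem_sUnion.1 hzUF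
        obtain ⟨b, hb, c, hc, rfl⟩ := ZFSet.mem_prod.1 (hF hpF)
        simp only [ZFSet.pair, ZFSet.mem_insert_iff, ZFSet.mem_singleton] at hzp
        have hbB : b ∈ transCl ({B} : ZFSet) := subset_transCl_singleton B hb
        have hcC : c ∈ transCl ({C} : ZFSet) := subset_transCl_singleton C hc
        intro w hw
        rcases hzp with rfl | rfl
        · rw [ZFSet.mem_singleton] at hw
          subst hw
          exact ZFSet.mem_union.2 (Or.inr (ZFSet.mem_union.2 (Or.inl hbB)))
        · simp only [ZFSet.mem_insert_iff, ZFSet.mem_singleton] at hw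
          rcases hw with rfl | rfl
          · exact ZFSet.mem_union.2 (Or.inr (ZFSet.mem_union.2 (Or.inl hbB)))
          · exact ZFSet.mem_union.2 (Or.inr (ZFSet.mem_union.2 (Or.inr hcC)))
    · rcases ZFSet.mem_union.1 hz2 with hzB | hzC
      · intro w hw
        exact ZFSet.mem_union.2 (Or.inr (ZFSet.mem_union.2
          (Or.inl (transCl_isTransitive _ z hzB hw))))
      · intro w hw
        exact ZFSet.mem_union.2 (Or.inr (ZFSet.mem_union.2
          (Or.inr (transCl_isTransitive _ z hzC hw))))
  have hFU : F ⊆ U := fun z hz =>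
    ZFSet.mem_union.2 (Or.inl (ZFSet.mem_union.2 (Or.inl hz)))
  have hcard : Cardinal.mk U.toSet ≤ κ := by
    have h1 : Cardinal.mk F.toSet ≤ κ := by
      refine (card_subset hF).trans ?_
      refine (card_prod_le B C).trans ?_
      calc Cardinal.mk B.toSet * Cardinal.mk C.toSet ≤ κ * κ := mul_le_mul' hBsub hCsub
        _ = κ := Cardinal.mul_eq_self hκ
    have h2 : Cardinal.mk (ZFSet.sUnion F).toSet ≤ κ :=
      (card_sUnion_pairs_le hF).trans (Cardinal.add_le_of_le hκ h1 h1)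
    refine (card_union_le _ _).trans ?_
    refine Cardinal.add_le_of_le hκ ((card_union_le _ _).trans (Cardinal.add_le_of_le hκ h1 h2)) ?_
    exact (card_union_le _ _).trans (Cardinal.add_le_of_le hκ hB hC)
  exact ctc_le_of_subset hκ hUtrans hFU hcard

/-! ### Ordinals -/

theorem isOrd_mem {x y : ZFSet} (hx : IsOrd x) (hy : y ∈ x) : IsOrd y := by
  obtain ⟨htr, hlin, htans⟩ := hx
  have hyx : y ⊆ x := htr y hy
  refine ⟨?_, fun a ha b hb => hlin a (hyx ha) b (hyx hb),
    fun a ha b hb c hc hab hbc => htans a (hyx ha) b (hyx hb) c (hyx hc) hab hbc⟩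
  intro b hb
  intro a hab
  exact htans a (htr b (hyx hb) hab) b (hyx hb) y hy hab hb

theorem isOrd_inter {x y : ZFSet} (hx : IsOrd x) (hy : IsOrd y) : IsOrd (x ∩ y) := by
  have hsx : x ∩ y ⊆ x := fun z hz => (ZFSet.mem_inter.1 hz).1
  have hsy : x ∩ y ⊆ y := fun z hz => (ZFSet.mem_inter.1 hz).2
  refine ⟨?_, fun a ha b hb => hx.2.1 a (hsx ha) b (hsx hb),
    fun a ha b hb c hc hab hbc => hx.2.2 a (hsx ha) b (hsx hb) c (hsx hc) hab hbc⟩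
  intro z hz
  intro w hw
  exact ZFSet.mem_inter.2 ⟨hx.1 z (hsx hz) hw, hy.1 z (hsy hz) hw⟩

theorem isOrd_ssubset_mem {x y : ZFSet} (hx : IsOrd x) (hy : IsOrd y)
    (hsub : x ⊆ y) (hne : x ≠ y) : x ∈ y := by
  set D := ZFSet.sep (fun z => z ∉ x) y with hD
  have hDne : D ≠ ∅ := by
    intro h0
    apply hne
    apply ZFSet.ext
    intro z
    refine ⟨fun hz => hsub hz, fun hz => ?_⟩
    by_contra hzx
    have : z ∈ D := ZFSet.mem_sep.2 ⟨hz, hzx⟩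
    rw [h0] at this
    exact ZFSet.notMem_empty z this
  obtain ⟨c, hcD, hmin⟩ := ZFSet.regularity D hDne
  have hcy : c ∈ y := (ZFSet.mem_sep.1 hcD).1
  have hcx : c ∉ x := (ZFSet.mem_sep.1 hcD).2
  have hc_eq : c = x := by
    apply ZFSet.ext
    intro z
    constructor
    · intro hzc
      have hzy : z ∈ y := hy.1 c hcy hzc
      by_contra hzx
      have : z ∈ D ∩ c := ZFSet.mem_inter.2 ⟨ZFSet.mem_sep.2 ⟨hzy, hzx⟩, hzc⟩
      rw [hmin] at this
      exact ZFSet.notMem_empty z this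
    · intro hzx
      have hzy : z ∈ y := hsub hzx
      rcases hy.2.1 z hzy c hcy with h | h | h
      · exact h
      · exact absurd (h ▸ hzx) hcx
      · exact absurd (hx.1 z hzx h) hcx
  rw [← hc_eq]
  exact hcy

theorem isOrd_trichotomy {x y : ZFSet} (hx : IsOrd x) (hy : IsOrd y) :
    x ∈ y ∨ x = y ∨ y ∈ x := by
  have hw : IsOrd (x ∩ y) := isOrd_inter hx hy
  have hwx : x ∩ y ⊆ x := fun z hz => (ZFSet.mem_inter.1 hz).1
  have hwy : x ∩ y ⊆ y := fun z hz => (ZFSet.mem_inter.1 hz).2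
  by_cases h1 : x ∩ y = x
  · by_cases h2 : x ∩ y = y
    · exact Or.inr (Or.inl (h1.symm.trans h2))
    · exact Or.inl (h1 ▸ isOrd_ssubset_mem hw hy hwy h2)
  · have hwxm : x ∩ y ∈ x := isOrd_ssubset_mem hw hx hwx h1
    by_cases h2 : x ∩ y = y
    · exact Or.inr (Or.inr (h2 ▸ hwxm))
    · have hwym : x ∩ y ∈ y := isOrd_ssubset_mem hw hy hwy h2
      exact absurd (ZFSet.mem_inter.2 ⟨hwxm, hwym⟩) (ZFSet.mem_irrefl _)

theorem isOrd_sUnion {S : ZFSet} (h : ∀ o ∈ S, IsOrd o) : IsOrd (ZFSet.sUnion S) := by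
  refine ⟨?_, ?_, ?_⟩
  · intro z hz
    obtain ⟨o, hoS, hzo⟩ := ZFSet.mem_sUnion.1 hz
    intro w hw
    exact ZFSet.mem_sUnion.2 ⟨o, hoS, (h o hoS).1 z hzo hw⟩
  · intro a ha b hb
    obtain ⟨o1, ho1, hao⟩ := ZFSet.mem_sUnion.1 ha
    obtain ⟨o2, ho2, hbo⟩ := ZFSet.mem_sUnion.1 hb
    exact isOrd_trichotomy (isOrd_mem (h o1 ho1) hao) (isOrd_mem (h o2 ho2) hbo)
  · intro a _ b _ c hc hab hbc
    obtain ⟨o, hoS, hco⟩ := ZFSet.mem_sUnion.1 hc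
    exact (isOrd_mem (h o hoS) hco).1 b hbc hab

theorem isOrd_succ {o : ZFSet} (h : IsOrd o) : IsOrd (insert o o) := by
  refine ⟨?_, ?_, ?_⟩
  · intro z hz
    rcases ZFSet.mem_insert_iff.1 hz with rfl | hzo
    · exact fun w hw => ZFSet.mem_insert_iff.2 (Or.inr hw)
    · exact fun w hw => ZFSet.mem_insert_iff.2 (Or.inr (h.1 z hzo hw))
  · intro a ha b hb
    rcases ZFSet.mem_insert_iff.1 ha with rfl | hao
    · rcases ZFSet.mem_insert_iff.1 hb with rfl | hbo
      · exact Or.inr (Or.inl rfl)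
      · exact Or.inr (Or.inr hbo)
    · rcases ZFSet.mem_insert_iff.1 hb with rfl | hbo
      · exact Or.inl hao
      · exact h.2.1 a hao b hbo
  · intro a _ b _ c hc hab hbc
    rcases ZFSet.mem_insert_iff.1 hc with rfl | hco
    · exact h.1 b hbc hab
    · exact (isOrd_mem h hco).1 b hbc hab

/-! ### Decoding surjections, for the set-hood of `H_X` -/

/-- The membership relation on `X` induced by `f`, as a set of pairs. -/
def EDef (X f : ZFSet) : ZFSet :=
  ZFSet.sep (fun q => ∃ u v s t, q = ZFSet.pair u v ∧ ZFSet.pair u s ∈ f ∧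
    ZFSet.pair v t ∈ f ∧ s ∈ t) (ZFSet.prod X X)

theorem decode_unique {X T T' f f' : ZFSet} (hf : ZFSurj X T f) (hf' : ZFSurj X T' f')
    (hTt : T.IsTransitive) (hT't : T'.IsTransitive) (hE : EDef X f = EDef X f') :
    ∀ t x, x ∈ X → ZFSet.pair x t ∈ f → ∀ t', ZFSet.pair x t' ∈ f' → t = t' := by
  refine fun t => ZFSet.mem_wf.induction
    (C := fun t => ∀ x, x ∈ X → ZFSet.pair x t ∈ f → ∀ t', ZFSet.pair x t' ∈ f' → t = t') t ?_
  intro t IH x hx hxt t' hxt'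
  apply ZFSet.ext
  intro z
  constructor
  · intro hz
    have htT : t ∈ T := (ZFSet.pair_mem_prod.1 (hf.1.1 hxt)).2
    have hzT : z ∈ T := hTt t htT hz
    obtain ⟨x1, hx1, hx1z⟩ := hf.2 z hzT
    have hq : ZFSet.pair x1 x ∈ EDef X f :=
      ZFSet.mem_sep.2 ⟨ZFSet.pair_mem_prod.2 ⟨hx1, hx⟩, x1, x, z, t, rfl, hx1z, hxt, hz⟩
    rw [hE] at hq
    obtain ⟨-, u, v, s2, t2, hpq, hus, hvt, hst⟩ := ZFSet.mem_sep.1 hq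
    obtain ⟨hu, hv⟩ := ZFSet.pair_injective hpq
    subst hu; subst hv
    obtain ⟨w, hw, hwu⟩ := hf'.1.2 x hx
    have ht2 : t2 = t' := (hwu _ hvt).trans (hwu _ hxt').symm
    have hz2 : z = s2 := IH z hz x1 hx1 hx1z s2 hus
    rw [hz2, ← ht2]
    exact hst
  · intro hz
    have htT' : t' ∈ T' := (ZFSet.pair_mem_prod.1 (hf'.1.1 hxt')).2
    have hzT' : z ∈ T' := hT't t' htT' hz
    obtain ⟨x2, hx2, hx2z⟩ := hf'.2 z hzT'
    have hq : ZFSet.pair x2 x ∈ EDef X f' :=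
      ZFSet.mem_sep.2 ⟨ZFSet.pair_mem_prod.2 ⟨hx2, hx⟩, x2, x, z, t', rfl, hx2z, hxt', hz⟩
    rw [← hE] at hq
    obtain ⟨-, u, v, s2, t2, hpq, hus, hvt, hst⟩ := ZFSet.mem_sep.1 hq
    obtain ⟨hu, hv⟩ := ZFSet.pair_injective hpq
    subst hu; subst hv
    obtain ⟨w, hw, hwu⟩ := hf.1.2 x hx
    have ht2 : t2 = t := (hwu _ hvt).trans (hwu _ hxt).symm
    have hs2t : s2 ∈ t := ht2 ▸ hst
    have hs2 : s2 = z := IH s2 hs2t x2 hx2 hus z hx2z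
    rw [← hs2]
    exact hs2t

/-- `p` codes the set `Y` (relative to the base set `X`). -/
def CodesY (X p Y : ZFSet) : Prop :=
  ∃ f a, ZFSurj X (transCl ({Y} : ZFSet)) f ∧ p = ZFSet.pair (EDef X f) a ∧ ZFSet.pair a Y ∈ f

theorem codesY_unique {X p Y Y' : ZFSet} (h : CodesY X p Y) (h' : CodesY X p Y') : Y = Y' := by
  obtain ⟨f, a, hf, rfl, haY⟩ := h
  obtain ⟨f', a', hf', hp', haY'⟩ := h'
  obtain ⟨hE, ha⟩ := ZFSet.pair_injective hp'
  subst ha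
  have haX : a ∈ X := (ZFSet.pair_mem_prod.1 (hf.1.1 haY)).1
  exact decode_unique hf hf' (transCl_isTransitive _) (transCl_isTransitive _) hE Y a haX haY Y' haY'

/-- Decoding function: from a code back to the coded set. -/
noncomputable def decode (X p : ZFSet) : ZFSet :=
  @Classical.epsilon _ ⟨∅⟩ (CodesY X p)

theorem exists_H (X : ZFSet) : ∃ H : ZFSet, ∀ Y, Y ∈ H ↔ MemH X Y := by
  haveI : Nonempty ZFSet := ⟨∅⟩
  refine ⟨ZFSet.sep (MemH X)
    (zimage (decode X) ((ZFSet.powerset (ZFSet.prod X X)).prod X)), fun Y => ?_⟩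
  constructor
  · exact fun h => (ZFSet.mem_sep.1 h).2
  · intro h
    obtain ⟨f, hf⟩ := h
    obtain ⟨a, ha, haY⟩ := hf.2 Y (mem_transCl_self Y)
    have hcode : CodesY X (ZFSet.pair (EDef X f) a) Y := ⟨f, a, hf, rfl, haY⟩
    have hdec : decode X (ZFSet.pair (EDef X f) a) = Y :=
      codesY_unique (Classical.epsilon_spec (⟨Y, hcode⟩ : ∃ Y, CodesY X (ZFSet.pair (EDef X f) a) Y)) hcode
    have hpmem : ZFSet.pair (EDef X f) a ∈ (ZFSet.powerset (ZFSet.prod X X)).prod X :=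
      ZFSet.pair_mem_prod.2 ⟨ZFSet.mem_powerset.2 (fun q hq => (ZFSet.mem_sep.1 hq).1), ha⟩
    refine ZFSet.mem_sep.2 ⟨?_, ⟨f, hf⟩⟩
    exact mem_zimage.2 ⟨_, hpmem, hdec⟩

/-! ## Statement 15 -/

theorem stmt15 (X : ZFSet) :
    (∃ H : ZFSet, ∀ Y, Y ∈ H ↔ MemH X Y) ∧
    (X.toSet.Infinite → X.IsTransitive →
      ∀ H : ZFSet, (∀ Y, Y ∈ H ↔ MemH X Y) →
        H.IsTransitive ∧ Full H ∧ SuccType H ∧ IsMaxCard X H ∧ StronglyRegular H) := by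
  refine ⟨exists_H X, ?_⟩
  intro hinf hXt H hH
  haveI : Nonempty ZFSet := ⟨∅⟩
  obtain ⟨x0, hx0⟩ : ∃ x0, x0 ∈ X := hinf.nonempty
  set κ := Cardinal.mk X.toSet with hκdef
  have hκ : Cardinal.aleph0 ≤ κ := by
    rw [← Cardinal.infinite_iff]
    exact Set.infinite_coe_iff.2 hinf
  -- membership in H via cardinality of transitive closures
  have hm : ∀ {Y : ZFSet}, Y ∈ H → Cardinal.mk (transCl ({Y} : ZFSet)).toSet ≤ κ :=
    fun hY => (memH_iff hx0).1 ((hH _).1 hY)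
  have hm' : ∀ {Y : ZFSet}, Cardinal.mk (transCl ({Y} : ZFSet)).toSet ≤ κ → Y ∈ H :=
    fun h => (hH _).2 ((memH_iff hx0).2 h)
  have hcard_of_mem : ∀ {Y : ZFSet}, Y ∈ H → Cardinal.mk Y.toSet ≤ κ :=
    fun hY => (card_subset (subset_transCl_singleton _)).trans (hm hY)
  -- H is transitive
  have hHtrans : H.IsTransitive := by
    intro Y hY
    intro Z hZ
    refine hm' (ctc_le_of_subset hκ (transCl_isTransitive _) ?_ (hm hY))
    exact transCl_isTransitive _ Z (subset_transCl_singleton Y hZ)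
  -- X belongs to H
  have hXH : X ∈ H := hm' (ctc_le_of_subset hκ hXt (fun z hz => hz) le_rfl)
  -- maximal cardinality
  have hmax : IsMaxCard X H := by
    refine ⟨hXH, fun Y hY => ?_⟩
    rcases ZFSet.eq_empty_or_nonempty Y with rfl | ⟨y0, hy0⟩
    · exact Or.inl rfl
    · right
      obtain ⟨f, hf⟩ := surj_of_card hx0 hy0 (hcard_of_mem hY)
      refine ⟨f, ?_, hf⟩
      exact hm' (ctc_pairs_le hκ hf.1.1 (hm hXH) (hm hY))
  -- fullness
  have hfull : Full H := by
    refine ⟨?_, ?_, ?_⟩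
    · -- transitively closed
      intro Y hY
      refine ⟨transCl ({Y} : ZFSet), ?_, transCl_isTransitive _, ?_, mem_transCl_self Y⟩
      · exact hm' (ctc_le_of_subset hκ (transCl_isTransitive _) (fun z hz => hz) (hm hY))
      · intro W hW
        exact hm' (ctc_le_of_subset hκ (transCl_isTransitive _)
          (transCl_isTransitive _ W hW) (hm hY))
    · -- closed under products
      intro Y1 h1 Y2 h2
      exact hm' (ctc_pairs_le hκ (fun z hz => hz) (hm h1) (hm h2))
    · -- closed under subsets
      intro Y hY
      intro A hA
      have hAY : A ⊆ Y := ZFSet.mem_powerset.1 hA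
      refine hm' (ctc_le_of_subset hκ (transCl_isTransitive _) ?_ (hm hY))
      exact fun z hz => subset_transCl_singleton Y (hAY hz)
  -- strong regularity
  have hreg : StronglyRegular H := by
    intro A hA f h1 h2 h3
    set vOf : ZFSet → ZFSet := fun p => Classical.epsilon (fun o => ∃ x, p = ZFSet.pair x o)
      with hvOf
    have vOf_spec : ∀ p x o, p = ZFSet.pair x o → vOf p = o := by
      intro p x o hp
      obtain ⟨x', hx'⟩ :=
        Classical.epsilon_spec (p := fun o => ∃ x, p = ZFSet.pair x o) ⟨o, x, hp⟩
      exact ((ZFSet.pair_injective (hp.symm.trans hx')).2).symm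
    set V := zimage vOf f with hV
    have hVord : ∀ o ∈ V, IsOrd o ∧ o ∈ H := by
      intro o ho
      obtain ⟨p, hp, rfl⟩ := mem_zimage.1 ho
      obtain ⟨x, hx, o', hord', hoH', hpeq⟩ := h1 p hp
      rw [vOf_spec p x o' hpeq]
      exact ⟨hord', hoH'⟩
    set β := ZFSet.sUnion (zimage (fun o => insert o o) V) with hβ
    have hβord : IsOrd β := by
      refine isOrd_sUnion ?_
      intro z hz
      obtain ⟨o, ho, rfl⟩ := mem_zimage.1 hz
      exact isOrd_succ (hVord o ho).1
    have hbound : ∀ x ∈ A, ∀ o, ZFSet.pair x o ∈ f → o ∈ β := by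
      intro x hx o hpo
      have hoV : o ∈ V := mem_zimage.2 ⟨ZFSet.pair x o, hpo, vOf_spec _ x o rfl⟩
      exact ZFSet.mem_sUnion.2 ⟨insert o o, mem_zimage.2 ⟨o, hoV, rfl⟩,
        ZFSet.mem_insert_iff.2 (Or.inl rfl)⟩
    have hcardf : Cardinal.mk f.toSet ≤ κ := by
      have hc : ∀ p : f.toSet, ∃ x : A.toSet, ∃ o, (p : ZFSet) = ZFSet.pair x.1 o := by
        rintro ⟨p, hp⟩
        obtain ⟨x, hx, o, -, -, hpeq⟩ := h1 p hp
        exact ⟨⟨x, hx⟩, o, hpeq⟩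
      choose ξ oξ hξ using hc
      have hinj : Function.Injective ξ := by
        intro p1 p2 hpe
        have m1 : ZFSet.pair (ξ p1).1 (oξ p1) ∈ f := by rw [← hξ p1]; exact p1.2
        have m2 : ZFSet.pair (ξ p1).1 (oξ p2) ∈ f := by rw [hpe, ← hξ p2]; exact p2.2
        have h3' := h3 (ξ p1).1 (ξ p1).2 (oξ p1) (oξ p2) m1 m2
        apply Subtype.ext
        rw [hξ p1, hξ p2, hpe, h3']
      exact (Cardinal.mk_le_of_injective hinj).trans (hcard_of_mem hA)
    have hcardβ : Cardinal.mk β.toSet ≤ κ := by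
      have hset : β.toSet = ⋃ (o : V.toSet), (insert (o : ZFSet) (o : ZFSet)).toSet := by
        ext z
        constructor
        · intro hz
          obtain ⟨w, hw, hzw⟩ := ZFSet.mem_sUnion.1 hz
          obtain ⟨o, ho, rfl⟩ := mem_zimage.1 hw
          exact Set.mem_iUnion.2 ⟨⟨o, ho⟩, hzw⟩
        · intro hz
          obtain ⟨⟨o, ho⟩, hzo⟩ := Set.mem_iUnion.1 hz
          exact ZFSet.mem_sUnion.2 ⟨insert o o, mem_zimage.2 ⟨o, ho, rfl⟩, hzo⟩
      have hVcard : Cardinal.mk V.toSet ≤ κ := (card_image_le _ _).trans hcardf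
      have heach : ∀ o : V.toSet, Cardinal.mk (insert (o : ZFSet) (o : ZFSet)).toSet ≤ κ := by
        rintro ⟨o, ho⟩
        refine (card_insert_le o o).trans ?_
        exact Cardinal.add_le_of_le hκ (hcard_of_mem (hVord o ho).2)
          ((le_of_lt Cardinal.one_lt_aleph0).trans hκ)
      calc Cardinal.mk β.toSet
          = Cardinal.mk (⋃ (o : V.toSet), (insert (o : ZFSet) (o : ZFSet)).toSet) := by rw [hset]
        _ ≤ Cardinal.sum (fun o : V.toSet => Cardinal.mk (insert (o : ZFSet) (o : ZFSet)).toSet) :=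
            Cardinal.mk_iUnion_le_sum_mk
        _ ≤ Cardinal.sum (fun _ : V.toSet => κ) := Cardinal.sum_le_sum _ _ heach
        _ = Cardinal.mk V.toSet * κ := Cardinal.sum_const' _ κ
        _ ≤ κ * κ := mul_le_mul' hVcard le_rfl
        _ = κ := Cardinal.mul_eq_self hκ
    have hβH : β ∈ H :=
      hm' (ctc_le_of_subset hκ hβord.1 (fun z hz => hz) hcardβ)
    exact ⟨β, hβord, hβH, hbound⟩
  exact ⟨hHtrans, hfull, ⟨X, hmax⟩, hmax, hreg⟩


end NairianModels
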